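/- Let G be a facet-inducing finite simple graph on vertex set V, and let H ⊆ V be nonempty and such that the induced subgraph G[H] is repeating for G, meaning: for every maximal stable set S of G with S ∩ H ≠ ∅, the set S ∩ H is a maximal stable set of G[H]. Then there exist |H| maximal stable sets of G[H] whose incidence vectors (in ℝ^H) are linearly independent. -/

import Mathlib

def IsStable {V : Type*} (G : SimpleGraph V) (S : Finset V) : Prop :=
  ∀ u ∈ S, ∀ w ∈ S, ¬ G.Adj u w

def MaxStable {V : Type*} (G : SimpleGraph V) (S : Finset V) : Prop :=
  IsStable G S ∧ ∀ T : Finset V, IsStable G T → S ⊆ T → S = T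

noncomputable def incVec {V : Type*} (S : Finset V) : V → ℝ :=
  Set.indicator (↑S) 1

def FacetInducing {V : Type*} (G : SimpleGraph V) : Prop :=
  ∃ c : V → ℝ,
    (∀ v, c v ≠ 0) ∧
    (∀ S : Finset V, IsStable G S → ∑ v ∈ S, c v ≤ 1) ∧
    ∃ S : Fin (Nat.card V) → Finset V,
      (∀ j, MaxStable G (S j)) ∧
      LinearIndependent ℝ (fun j => incVec (S j)) ∧
      ∀ j, ∑ v ∈ S j, c v = 1


/-- A maximal stable set of the subgraph of `G` induced by `H`, phrased with
subsets of the ambient vertex set. -/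
def MaxStableWithin {V : Type*} (G : SimpleGraph V) (H : Finset V) (S : Finset V) : Prop :=
  S ⊆ H ∧ IsStable G S ∧ ∀ T : Finset V, T ⊆ H → IsStable G T → S ⊆ T → S = T

theorem stmt5 {V : Type*} [Fintype V] [DecidableEq V] (G : SimpleGraph V)
    (hfi : FacetInducing G) (H : Finset V) (hne : H.Nonempty)
    (hrep : ∀ S : Finset V, MaxStable G S → (S ∩ H).Nonempty →
      MaxStableWithin G H (S ∩ H)) :
    ∃ T : Fin H.card → Finset V,
      (∀ j, MaxStableWithin G H (T j)) ∧
      LinearIndependent ℝ (fun j => fun h : {x // x ∈ H} => incVec (T j) h.1) := by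
  classical
  obtain ⟨c, hc0, hc1, S, hmax, hli, hsum⟩ := hfi
  set π : (V → ℝ) →ₗ[ℝ] ({x // x ∈ H} → ℝ) := LinearMap.funLeft ℝ ℝ Subtype.val with hπdef
  have hπ : Function.Surjective π :=
    LinearMap.funLeft_surjective_of_injective ℝ ℝ _ Subtype.val_injective
  haveI : Nonempty V := ⟨hne.choose⟩
  haveI : Nonempty (Fin (Nat.card V)) := ⟨⟨0, Nat.card_pos⟩⟩
  have hspanV : Submodule.span ℝ (Set.range fun j => incVec (S j)) = ⊤ := by
    apply hli.span_eq_top_of_card_eq_finrank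
    simp [Module.finrank_fintype_fun_eq_card, Nat.card_eq_fintype_card]
  set W : Set ({x // x ∈ H} → ℝ) :=
    {f | ∃ T, MaxStableWithin G H T ∧ f = fun h => incVec T h.1} with hWdef
  have hWspan : Submodule.span ℝ W = ⊤ := by
    rw [eq_top_iff]
    have himg : Submodule.span ℝ (π '' Set.range fun j => incVec (S j)) = ⊤ := by
      rw [← Submodule.map_span, hspanV, Submodule.map_top, LinearMap.range_eq_top.2 hπ]
    rw [← himg]
    apply Submodule.span_le.2
    rintro f ⟨g, ⟨j, rfl⟩, rfl⟩
    by_cases hne' : ((S j) ∩ H).Nonempty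
    · apply Submodule.subset_span
      refine ⟨S j ∩ H, hrep _ (hmax j) hne', ?_⟩
      funext h
      have hh : h.1 ∈ H := h.2
      simp [hπdef, LinearMap.funLeft, incVec, Set.indicator, hh]
    · have hempty : S j ∩ H = ∅ := Finset.not_nonempty_iff_eq_empty.mp hne'
      have : π (incVec (S j)) = 0 := by
        funext h
        have hnot : h.1 ∉ S j := by
          intro hmem
          have : h.1 ∈ S j ∩ H := Finset.mem_inter.mpr ⟨hmem, h.2⟩
          simp [hempty] at this
        simp [hπdef, LinearMap.funLeft, incVec, Set.indicator, hnot]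
      rw [this]
      exact Submodule.zero_mem _
  obtain ⟨t, htW, htspan, htli⟩ := exists_linearIndependent ℝ W
  rw [hWspan] at htspan
  have b : Module.Basis t ℝ ({x // x ∈ H} → ℝ) := Module.Basis.mk htli (by rw [Subtype.range_coe, htspan])
  haveI : Fintype t := FiniteDimensional.fintypeBasisIndex b
  have hcard : Fintype.card t = H.card := by
    have h1 := Module.finrank_eq_card_basis b
    rw [Module.finrank_fintype_fun_eq_card, Fintype.card_coe] at h1
    omega
  let e : Fin H.card ≃ t := (Fintype.equivFinOfCardEq hcard).symm
  have hmem : ∀ x : t, ∃ T, MaxStableWithin G H T ∧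
      (x : {x // x ∈ H} → ℝ) = fun h => incVec T h.1 := fun x => htW x.2
  choose T hT1 hT2 using hmem
  refine ⟨fun j => T (e j), fun j => hT1 _, ?_⟩
  have heq : (fun j => fun h : {x // x ∈ H} => incVec (T (e j)) h.1)
      = (fun j => ((e j : t) : {x // x ∈ H} → ℝ)) := by
    funext j; exact (hT2 (e j)).symm
  rw [heq]
  exact htli.comp e e.injective
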